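/- Let 1 → A → Γ → Q → 1 be a short exact sequence of groups with A abelian, and let Q act on A by conjugation in Γ. Assume that the group cohomology H²(Q; A) is finite, and let s be an integer with s ≡ 1 mod |H²(Q; A)|. Then there exists a group homomorphism φ : Γ → Γ such that φ(a) = aˢ for all a ∈ A and pr ∘ φ = pr, where pr : Γ → Q denotes the projection of the extension. -/

import Mathlib

open groupCohomology

/-- Let `1 → A → Γ → Q → 1` be a short exact sequence of groups with `A`
abelian, and let `Q` act on `A` by conjugation in `Γ` (the representation `ρ` below).
Assume that `H²(Q; A)` is finite and let `s` be an integer with `s ≡ 1 mod |H²(Q; A)|`.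
Then there exists a group homomorphism `φ : Γ →* Γ` (a *pseudo `s`-expansive* map) such that
`φ(a) = aˢ` for all `a ∈ A` and `pr ∘ φ = pr`. -/
theorem exists_pseudo_expansive_homomorphism
    (A Γ Q : Type) [CommGroup A] [Group Γ] [Group Q]
    (ι : A →* Γ) (pr : Γ →* Q)
    (hι : Function.Injective ι) (hpr : Function.Surjective pr)
    (hexact : pr.ker = ι.range)
    (ρ : Representation ℤ Q (Additive A))
    (hρ : ∀ (γ : Γ) (a : A),
      ι (Additive.toMul (ρ (pr γ) (Additive.ofMul a))) = γ * ι a * γ⁻¹)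
    (hfin : Finite (groupCohomology (Rep.of ρ) 2))
    (s : ℤ) (hs : s ≡ 1 [ZMOD (Nat.card (groupCohomology (Rep.of ρ) 2) : ℤ)]) :
    ∃ φ : Γ →* Γ, (∀ a : A, φ (ι a) = ι (a ^ s)) ∧ ∀ g : Γ, pr (φ g) = pr g := by
  classical
  -- a section of pr with σ 1 = 1
  obtain ⟨σ₀, hσ₀⟩ : ∃ σ₀ : Q → Γ, ∀ q, pr (σ₀ q) = q :=
    ⟨fun q => (hpr q).choose, fun q => (hpr q).choose_spec⟩
  set σ : Q → Γ := fun q => σ₀ q * (σ₀ 1)⁻¹ with hσdef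
  have hσ : ∀ q, pr (σ q) = q := by
    intro q; simp [hσdef, hσ₀]
  have hσ1 : σ 1 = 1 := by simp [hσdef]
  -- inverse of ι on its range
  have hj : ∀ x : Γ, pr x = 1 → ∃ a : A, ι a = x := by
    intro x hx
    have : x ∈ ι.range := hexact ▸ hx
    exact this.imp fun a ha => ha
  set j : ∀ x : Γ, pr x = 1 → A := fun x hx => (hj x hx).choose with hjdef
  have hjspec : ∀ (x : Γ) (hx : pr x = 1), ι (j x hx) = x := fun x hx => (hj x hx).choose_spec
  -- the multiplicative action
  set α : Q → A → A := fun q a => Additive.toMul (ρ q (Additive.ofMul a)) with hαdef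
  have hα : ∀ (q : Q) (a : A), ι (α q a) = σ q * ι a * (σ q)⁻¹ := by
    intro q a
    have := hρ (σ q) a
    rwa [hσ q] at this
  have hαpow : ∀ (q : Q) (a : A) (n : ℤ), α q (a ^ n) = (α q a) ^ n := by
    intro q a n
    simp only [hαdef]
    have h1 : Additive.ofMul (a ^ n) = n • Additive.ofMul a := by
      rfl
    rw [h1, map_zsmul]
    rfl
  have hαmul : ∀ (q : Q) (a b : A), α q (a * b) = α q a * α q b := by
    intro q a b
    simp only [hαdef]
    have h1 : Additive.ofMul (a * b) = Additive.ofMul a + Additive.ofMul b := rfl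
    rw [h1, map_add]
    rfl
  -- the cocycle
  have hker : ∀ q r : Q, pr (σ q * σ r * (σ (q * r))⁻¹) = 1 := by
    intro q r
    rw [map_mul, map_mul, map_inv, hσ, hσ, hσ, mul_inv_cancel]
  set f : Q → Q → A := fun q r => j (σ q * σ r * (σ (q * r))⁻¹) (hker q r) with hfdef
  have hf : ∀ q r : Q, σ q * σ r = ι (f q r) * σ (q * r) := by
    intro q r
    rw [hfdef, hjspec (σ q * σ r * (σ (q * r))⁻¹) (hker q r)]
    group
  have hf1 : f 1 1 = 1 := by
    apply hι
    rw [map_one]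
    have := hf 1 1
    simp only [one_mul, mul_one, hσ1] at this
    exact this.symm
  -- the cocycle identity
  have hcoc : ∀ q r t : Q, f (q * r) t * f q r = α q (f r t) * f q (r * t) := by
    intro q r t
    apply hι
    have h1 : σ q * σ r * σ t = ι (f q r) * (ι (f (q * r) t) * σ (q * r * t)) := by
      rw [hf q r, mul_assoc, hf (q * r) t]
    have h2 : σ q * σ r * σ t = ι (α q (f r t)) * (ι (f q (r * t)) * σ (q * (r * t))) := by
      rw [mul_assoc, hf r t, ← hf q (r * t), hα q]
      group
    rw [mul_assoc q r t] at h1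
    have key : ι (f q r) * ι (f (q * r) t) = ι (α q (f r t)) * ι (f q (r * t)) :=
      mul_right_cancel (by rw [mul_assoc, mul_assoc, ← h1, ← h2])
    rw [mul_comm (f (q * r) t), map_mul, map_mul]
    exact key
  -- package as an element of twoCocycles
  set F : Q × Q → Additive A := fun p => Additive.ofMul (f p.1 p.2) with hFdef
  have hFmem : F ∈ cocycles₂ (Rep.of ρ) := by
    rw [mem_cocycles₂_iff]
    intro g h k
    show Additive.ofMul (f (g * h) k) + Additive.ofMul (f g h)
      = ρ g (Additive.ofMul (f h k)) + Additive.ofMul (f g (h * k))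
    rw [← ofMul_mul, hcoc g h k]
    rfl
  -- (s - 1) • [F] = 0 in H2
  have hcard : Nat.card (H2 (Rep.of ρ)) = Nat.card (groupCohomology (Rep.of ρ) 2) :=
    rfl
  have hfinH2 : Finite (H2 (Rep.of ρ)) :=
    hfin
  obtain ⟨k, hk⟩ : (Nat.card (groupCohomology (Rep.of ρ) 2) : ℤ) ∣ s - 1 :=
    Int.ModEq.dvd hs.symm
  have hzero : (s - 1) • (H2π (Rep.of ρ) (⟨F, hFmem⟩ : cocycles₂ (Rep.of ρ)) : H2 (Rep.of ρ)) = 0 := by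
    rw [hk, mul_comm, mul_smul, natCast_zsmul, ← hcard,
      card_nsmul_eq_zero']
    exact zsmul_zero (α := H2 (Rep.of ρ)) k
  have hmem : ⇑((s - 1) • (⟨F, hFmem⟩ : cocycles₂ (Rep.of ρ))) ∈ coboundaries₂ (Rep.of ρ) := by
    rwa [← H2π_eq_zero_iff, map_zsmul]
  obtain ⟨c, hc⟩ := hmem
  -- multiplicative 1-cochain
  set cm : Q → A := fun q => Additive.toMul (c q) with hcmdef
  have h0 : ∀ q r : Q, α q (cm r) / cm (q * r) * cm q = f q r ^ (s - 1) := by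
    intro q r
    have h := congrFun hc (q, r)
    rw [d₁₂_hom_apply] at h
    exact congrArg Additive.toMul h
  have hα1 : ∀ x : A, α 1 x = x := by
    intro x; simp [hαdef]
  have hcm1 : cm 1 = 1 := by
    have h := h0 1 1
    rw [one_mul, hα1, hf1, one_zpow, div_self', one_mul] at h
    exact h
  have hrel : ∀ q r : Q, cm q * α q (cm r) = f q r ^ (s - 1) * cm (q * r) := by
    intro q r
    have h := h0 q r
    rw [div_mul_eq_mul_div, div_eq_iff_eq_mul] at h
    rw [mul_comm (cm q), h]
  -- decomposition of elements of Γ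
  have hdec : ∀ γ : Γ, pr (γ * (σ (pr γ))⁻¹) = 1 := by
    intro γ; rw [map_mul, map_inv, hσ, mul_inv_cancel]
  set aof : Γ → A := fun γ => j (γ * (σ (pr γ))⁻¹) (hdec γ) with haofdef
  have haof : ∀ γ : Γ, ι (aof γ) * σ (pr γ) = γ := by
    intro γ
    rw [haofdef, hjspec (γ * (σ (pr γ))⁻¹) (hdec γ)]
    group
  have haofι : ∀ γ : Γ, ι (aof γ) = γ * (σ (pr γ))⁻¹ := by
    intro γ; rw [haofdef, hjspec (γ * (σ (pr γ))⁻¹) (hdec γ)]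
  have hprι : ∀ x : A, pr (ι x) = 1 := by
    intro x
    have : ι x ∈ pr.ker := by rw [hexact]; exact ⟨x, rfl⟩
    exact this
  -- the homomorphism
  set φf : Γ → Γ := fun γ => ι (aof γ ^ s * cm (pr γ)) * σ (pr γ) with hφdef
  have hmul : ∀ γ₁ γ₂ : Γ, φf (γ₁ * γ₂) = φf γ₁ * φf γ₂ := by
    intro γ₁ γ₂
    have hpr12 : pr (γ₁ * γ₂) = pr γ₁ * pr γ₂ := map_mul pr γ₁ γ₂
    have h12 : aof (γ₁ * γ₂) = aof γ₁ * α (pr γ₁) (aof γ₂) * f (pr γ₁) (pr γ₂) := by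
      apply hι
      rw [haofι (γ₁ * γ₂), hpr12]
      calc γ₁ * γ₂ * (σ (pr γ₁ * pr γ₂))⁻¹
          = ι (aof γ₁) * σ (pr γ₁) * (ι (aof γ₂) * σ (pr γ₂)) * (σ (pr γ₁ * pr γ₂))⁻¹ := by
            rw [haof γ₁, haof γ₂]
        _ = ι (aof γ₁) * (σ (pr γ₁) * ι (aof γ₂) * (σ (pr γ₁))⁻¹) *
              (σ (pr γ₁) * σ (pr γ₂)) * (σ (pr γ₁ * pr γ₂))⁻¹ := by group
        _ = ι (aof γ₁) * ι (α (pr γ₁) (aof γ₂)) *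
              (ι (f (pr γ₁) (pr γ₂)) * σ (pr γ₁ * pr γ₂)) * (σ (pr γ₁ * pr γ₂))⁻¹ := by
            rw [hα, hf]
        _ = ι (aof γ₁) * ι (α (pr γ₁) (aof γ₂)) * ι (f (pr γ₁) (pr γ₂)) := by group
        _ = ι (aof γ₁ * α (pr γ₁) (aof γ₂) * f (pr γ₁) (pr γ₂)) := by
            rw [map_mul, map_mul]
    set q := pr γ₁
    set r := pr γ₂
    set a := aof γ₁
    set b := aof γ₂
    -- the key identity in A
    have hA : (a * α q b * f q r) ^ s * cm (q * r)
        = a ^ s * cm q * (α q (b ^ s * cm r) * f q r) := by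
      rw [hαmul, hαpow, mul_zpow, mul_zpow]
      have hs1 : s - 1 + 1 = s := by omega
      have hfs : f q r ^ s = f q r ^ (s - 1) * f q r := by
        rw [← zpow_add_one, hs1]
      rw [hfs]
      calc a ^ s * (α q b) ^ s * (f q r ^ (s - 1) * f q r) * cm (q * r)
          = a ^ s * (α q b) ^ s * (f q r ^ (s - 1) * cm (q * r)) * f q r := by
            ac_rfl
        _ = a ^ s * (α q b) ^ s * (cm q * α q (cm r)) * f q r := by rw [← hrel q r]
        _ = a ^ s * cm q * ((α q b) ^ s * α q (cm r) * f q r) := by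
            ac_rfl
    show ι (aof (γ₁ * γ₂) ^ s * cm (pr (γ₁ * γ₂))) * σ (pr (γ₁ * γ₂))
        = ι (a ^ s * cm q) * σ q * (ι (b ^ s * cm r) * σ r)
    rw [hpr12, h12, hA]
    rw [map_mul ι (a ^ s * cm q) (α q (b ^ s * cm r) * f q r),
      map_mul ι (α q (b ^ s * cm r)) (f q r), hα,
      show σ (q * r) = (ι (f q r))⁻¹ * (σ q * σ r) from by rw [hf q r]; group]
    group
  refine ⟨MonoidHom.mk' φf hmul, ?_, ?_⟩
  · intro a
    have hpa : pr (ι a) = 1 := hprι a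
    have haa : aof (ι a) = a := by
      apply hι
      rw [haofι (ι a), hpa, hσ1]
      group
    show ι (aof (ι a) ^ s * cm (pr (ι a))) * σ (pr (ι a)) = ι (a ^ s)
    rw [haa, hpa, hcm1, mul_one, hσ1, mul_one]
  · intro g
    show pr (ι (aof g ^ s * cm (pr g)) * σ (pr g)) = pr g
    rw [map_mul, hprι, one_mul, hσ]
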